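/- For every integer k ≥ 6, the sets 𝒜 = {0, 3, 5, k+3, k+4, k+5} ∪ {7, 8, ..., k} and ℬ = {0, 2, 4, 5, k+4, k+5} ∪ {7, 8, ..., k} of integers satisfy Δ(𝒜) = Δ(ℬ) as multisets of integers, where Δ(X) = {x − x' : x, x' ∈ X}. -/

import Mathlib

open Finset in
lemma msL (c lo hi : ℤ) : (Finset.Icc lo hi).val.map (fun x => c - x) = (Finset.Icc (c - hi) (c - lo)).val := by
  have h : Finset.map ⟨fun x => c - x, by intro a b h; dsimp at h; omega⟩ (Finset.Icc lo hi) = Finset.Icc (c - hi) (c - lo) := by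
    ext x
    simp only [Finset.mem_map, Finset.mem_Icc, Function.Embedding.coeFn_mk]
    constructor
    · rintro ⟨a, ⟨h1, h2⟩, rfl⟩; show c - hi ≤ c - a ∧ c - a ≤ c - lo; omega
    · intro h; exact ⟨c - x, by omega, by show c - (c - x) = x; omega⟩
  rw [← h, Finset.map_val]; rfl

open Finset in
lemma msR (c lo hi : ℤ) : (Finset.Icc lo hi).val.map (fun x => x - c) = (Finset.Icc (lo - c) (hi - c)).val := by
  have h : Finset.map ⟨fun x => x - c, by intro a b h; dsimp at h; omega⟩ (Finset.Icc lo hi) = Finset.Icc (lo - c) (hi - c) := by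
    ext x
    simp only [Finset.mem_map, Finset.mem_Icc, Function.Embedding.coeFn_mk]
    constructor
    · rintro ⟨a, ⟨h1, h2⟩, rfl⟩; show lo - c ≤ a - c ∧ a - c ≤ hi - c; omega
    · intro h; exact ⟨x + c, by omega, by show x + c - c = x; omega⟩
  rw [← h, Finset.map_val]; rfl

lemma splitL (a b : ℤ) (h : a ≤ b) : (Finset.Icc a b).val = {a} + (Finset.Icc (a+1) b).val := by
  have h1 : Finset.Icc a b = insert a (Finset.Icc (a+1) b) := by
    ext x; simp only [Finset.mem_Icc, Finset.mem_insert]; omega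
  have h2 : a ∉ Finset.Icc (a+1) b := by simp
  rw [h1, Finset.insert_val_of_notMem h2, Multiset.singleton_add]

lemma splitR (a b : ℤ) (h : a ≤ b) : (Finset.Icc a b).val = {b} + (Finset.Icc a (b-1)).val := by
  have h1 : Finset.Icc a b = insert b (Finset.Icc a (b-1)) := by
    ext x; simp only [Finset.mem_Icc, Finset.mem_insert]; omega
  have h2 : b ∉ Finset.Icc a (b-1) := by simp
  rw [h1, Finset.insert_val_of_notMem h2, Multiset.singleton_add]

theorem counterexample_same_differences (k : ℤ) (hk : 6 ≤ k)
    (A B : Finset ℤ)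
    (hA : A = ({0, 3, 5, k + 3, k + 4, k + 5} : Finset ℤ) ∪ Finset.Icc 7 k)
    (hB : B = ({0, 2, 4, 5, k + 4, k + 5} : Finset ℤ) ∪ Finset.Icc 7 k) :
    ((A ×ˢ A).val.map fun p => p.1 - p.2)
      = ((B ×ˢ B).val.map fun p => p.1 - p.2) := by
  rcases (by omega : k = 6 ∨ 7 ≤ k) with rfl | hk7
  · subst hA hB
    decide
  have hAv : A.val = {0} + ({3} + ({5} + ({k+3} + ({k+4} + ({k+5} + (Finset.Icc 7 k).val))))) := by
    rw [hA]
    have hsing : ({k+5} : Finset ℤ) ∪ Finset.Icc 7 k = insert (k+5) (Finset.Icc 7 k) := by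
      ext x; simp
    rw [Finset.insert_union, Finset.insert_union, Finset.insert_union, Finset.insert_union,
        Finset.insert_union, hsing]
    rw [Finset.insert_val_of_notMem (by simp [Finset.mem_Icc] <;> omega),
        Finset.insert_val_of_notMem (by simp [Finset.mem_Icc] <;> omega),
        Finset.insert_val_of_notMem (by simp [Finset.mem_Icc] <;> omega),
        Finset.insert_val_of_notMem (by simp [Finset.mem_Icc] <;> omega),
        Finset.insert_val_of_notMem (by simp [Finset.mem_Icc] <;> omega),
        Finset.insert_val_of_notMem (by simp [Finset.mem_Icc] <;> omega)]
    simp only [← Multiset.singleton_add]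
  have hBv : B.val = {0} + ({2} + ({4} + ({5} + ({k+4} + ({k+5} + (Finset.Icc 7 k).val))))) := by
    rw [hB]
    have hsing : ({k+5} : Finset ℤ) ∪ Finset.Icc 7 k = insert (k+5) (Finset.Icc 7 k) := by
      ext x; simp
    rw [Finset.insert_union, Finset.insert_union, Finset.insert_union, Finset.insert_union,
        Finset.insert_union, hsing]
    rw [Finset.insert_val_of_notMem (by simp [Finset.mem_Icc] <;> omega),
        Finset.insert_val_of_notMem (by simp [Finset.mem_Icc] <;> omega),
        Finset.insert_val_of_notMem (by simp [Finset.mem_Icc] <;> omega),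
        Finset.insert_val_of_notMem (by simp [Finset.mem_Icc] <;> omega),
        Finset.insert_val_of_notMem (by simp [Finset.mem_Icc] <;> omega),
        Finset.insert_val_of_notMem (by simp [Finset.mem_Icc] <;> omega)]
    simp only [← Multiset.singleton_add]
  have hprod : ∀ (S : Finset ℤ), ((S ×ˢ S).val.map fun p => p.1 - p.2)
      = S.val.bind (fun a => S.val.map (fun b => a - b)) := by
    intro S
    rw [Finset.product_val]
    simp [SProd.sprod, Multiset.product, Multiset.map_bind, Multiset.map_map]
  rw [hprod, hprod, hAv, hBv]
  simp only [Multiset.add_bind, Multiset.singleton_bind, Multiset.map_add,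
    Multiset.map_singleton, Multiset.bind_add, Multiset.bind_singleton, msL, msR]
  ring_nf
  have hs1 := splitL 4 (-3+k) (by omega)
  have hs2 := splitR 5 (-2+k) (by omega)
  have hs3 := splitR (3-k) (-4) (by omega)
  have hs4 := splitL (2-k) (-5) (by omega)
  ring_nf at hs1 hs2 hs3 hs4
  rw [hs1, hs2, hs3, hs4]
  abel
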